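/- arXiv:2407.09914 — 5 statements merged into one kernel-verified Lean document; each statement's English description precedes it below -/
import Mathlib

section
/- Let a < b be reals and f : [a,b] → ℝ be continuous. For each N ≥ 1 set dt = (b−a)/N, and suppose tags t_{N,n} ∈ [a + n·dt, a + (n+1)·dt] are chosen for 0 ≤ n ≤ N−1, together with error terms ε_{N,n} ∈ ℝ satisfying |ε_{N,n}| ≤ C/N² for some constant C independent of N and n. Then lim_{N→∞} ∏_{n=0}^{N−1} (1 + f(t_{N,n})·dt + ε_{N,n}) = exp(∫_a^b f(t) dt). -/
open Filter

/-- Let `a < b` and `f : [a,b] → ℝ` continuous. For each `N ≥ 1` let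
`dt = (b-a)/N` and suppose the tags `t N n` lie in `[a + n·dt, a + (n+1)·dt]` and the
error terms `ε N n` satisfy `|ε N n| ≤ C/N²` for a constant `C` independent of `N, n`.
Then `∏_{n=0}^{N-1} (1 + f(t N n)·dt + ε N n) → exp (∫_a^b f)` as `N → ∞`. -/
theorem stmt_1 (a b : ℝ) (hab : a < b) (f : ℝ → ℝ)
    (hf : ContinuousOn f (Set.Icc a b))
    (t : ℕ → ℕ → ℝ) (ε : ℕ → ℕ → ℝ) (C : ℝ)
    (ht : ∀ N n : ℕ, 1 ≤ N → n < N →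
      t N n ∈ Set.Icc (a + (n : ℝ) * ((b - a) / N)) (a + ((n : ℝ) + 1) * ((b - a) / N)))
    (hε : ∀ N n : ℕ, 1 ≤ N → n < N → |ε N n| ≤ C / (N : ℝ) ^ 2) :
    Tendsto (fun N : ℕ => ∏ n ∈ Finset.range N,
        (1 + f (t N n) * ((b - a) / N) + ε N n))
      atTop (nhds (Real.exp (∫ s in a..b, f s))) := by
  have hba : (0:ℝ) < b - a := sub_pos.2 hab
  -- tags lie in [a,b]
  have htab : ∀ N n : ℕ, 1 ≤ N → n < N → t N n ∈ Set.Icc a b := by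
    intro N n hN hn
    obtain ⟨h1, h2⟩ := ht N n hN hn
    have hNpos : (0:ℝ) < N := by exact_mod_cast hN
    have hdt : (0:ℝ) < (b - a) / N := div_pos hba hNpos
    have hn1 : ((n:ℝ) + 1) ≤ N := by exact_mod_cast Nat.succ_le_of_lt hn
    constructor
    · nlinarith [mul_nonneg (Nat.cast_nonneg (α := ℝ) n) hdt.le]
    · have : a + ((n:ℝ)+1) * ((b-a)/N) ≤ a + (N:ℝ) * ((b-a)/N) := by
        gcongr
      have hb : a + (N:ℝ) * ((b-a)/N) = b := by field_simp; ring
      linarith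
  -- bound on f
  obtain ⟨M, hM⟩ := isCompact_Icc.exists_bound_of_continuousOn hf
  have hM0 : 0 ≤ M := le_trans (norm_nonneg _) (hM a ⟨le_refl a, hab.le⟩)
  have hC0 : 0 ≤ C := by
    have := hε 1 0 le_rfl Nat.one_pos
    have := abs_nonneg (ε 1 0)
    simp only [Nat.cast_one, one_pow, div_one] at *
    linarith
  set K : ℝ := M * (b - a) + C with hK
  have hK0 : 0 ≤ K := by positivity
  -- bound on the increments
  set u : ℕ → ℕ → ℝ := fun N n => f (t N n) * ((b - a) / N) + ε N n with hu
  have hubd : ∀ N n : ℕ, 1 ≤ N → n < N → |u N n| ≤ K / N := by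
    intro N n hN hn
    have hNpos : (0:ℝ) < N := by exact_mod_cast hN
    have hN1 : (1:ℝ) ≤ N := by exact_mod_cast hN
    have h1 : |f (t N n) * ((b - a) / N)| ≤ M * (b - a) / N := by
      rw [abs_mul, abs_of_pos (div_pos hba hNpos)]
      rw [mul_div_assoc]
      gcongr
      exact hM _ (htab N n hN hn)
    have h2 : |ε N n| ≤ C / N := by
      refine le_trans (hε N n hN hn) ?_
      rw [div_le_div_iff₀ (by positivity) hNpos]
      nlinarith [mul_nonneg (mul_nonneg hC0 hNpos.le) (sub_nonneg.2 hN1)]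
    calc |u N n| ≤ |f (t N n) * ((b - a) / N)| + |ε N n| := abs_add_le _ _
      _ ≤ M * (b - a) / N + C / N := add_le_add h1 h2
      _ = K / N := by rw [hK]; ring
  -- Riemann sums converge
  have hS : Tendsto (fun N : ℕ => ∑ n ∈ Finset.range N, f (t N n) * ((b - a) / N))
      atTop (nhds (∫ s in a..b, f s)) := by
    rw [Metric.tendsto_atTop]
    intro e he
    have hunif := isCompact_Icc.uniformContinuousOn_of_continuous hf
    rw [Metric.uniformContinuousOn_iff] at hunif
    obtain ⟨δ, hδ, hδ'⟩ := hunif (e / (2 * (b - a))) (by positivity)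
    obtain ⟨N₀, hN₀⟩ := exists_nat_gt ((b - a) / δ)
    refine ⟨max N₀ 1, fun N hN => ?_⟩
    have hN1 : 1 ≤ N := le_trans (le_max_right _ _) hN
    have hNN0 : N₀ ≤ N := le_trans (le_max_left _ _) hN
    have hNpos : (0:ℝ) < N := by exact_mod_cast hN1
    set dt : ℝ := (b - a) / N with hdt
    have hdtpos : 0 < dt := div_pos hba hNpos
    have hdtδ : dt < δ := by
      rw [hdt, div_lt_iff₀ hNpos]
      have h1 : (b - a) / δ < N := lt_of_lt_of_le hN₀ (by exact_mod_cast hNN0)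
      rw [div_lt_iff₀ hδ] at h1
      linarith [h1]
    set x : ℕ → ℝ := fun n => a + n * dt with hx
    have hxmono : ∀ n : ℕ, x n ≤ x (n + 1) := by
      intro n
      simp only [hx]
      push_cast
      nlinarith [hdtpos.le]
    have hxIcc : ∀ n : ℕ, n ≤ N → x n ∈ Set.Icc a b := by
      intro n hn
      have hn' : (n:ℝ) ≤ N := by exact_mod_cast hn
      have hxN : a + (N:ℝ) * dt = b := by rw [hdt]; field_simp; ring
      constructor
      · simp only [hx]; nlinarith [mul_nonneg (Nat.cast_nonneg (α := ℝ) n) hdtpos.le]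
      · simp only [hx]; nlinarith [mul_le_mul_of_nonneg_right hn' hdtpos.le]
    have hsub : ∀ n : ℕ, n < N → Set.Icc (x n) (x (n+1)) ⊆ Set.Icc a b := by
      intro n hn
      exact Set.Icc_subset_Icc (hxIcc n hn.le).1 (hxIcc (n+1) hn).2
    have hint : ∀ k : ℕ, k < N → IntervalIntegrable f MeasureTheory.volume (x k) (x (k+1)) := by
      intro k hk
      apply ContinuousOn.intervalIntegrable
      apply hf.mono
      rw [Set.uIcc_of_le (hxmono k)]
      exact hsub k hk
    have hsplit : (∫ s in a..b, f s) = ∑ n ∈ Finset.range N, ∫ s in x n..x (n+1), f s := by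
      rw [intervalIntegral.sum_integral_adjacent_intervals hint]
      have h0 : x 0 = a := by simp [hx]
      have hNb : x N = b := by
        simp only [hx, hdt]; field_simp; ring
      rw [h0, hNb]
    -- per-term estimate
    have hterm : ∀ n ∈ Finset.range N,
        |f (t N n) * dt - ∫ s in x n..x (n+1), f s| ≤ e / (2 * (b - a)) * dt := by
      intro n hn
      rw [Finset.mem_range] at hn
      have hxdiff : x (n+1) - x n = dt := by simp only [hx]; push_cast; ring
      have hconst : f (t N n) * dt = ∫ s in x n..x (n+1), f (t N n) := by
        rw [intervalIntegral.integral_const, smul_eq_mul, hxdiff, mul_comm]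
      rw [hconst, ← intervalIntegral.integral_sub (intervalIntegrable_const) (hint n hn)]
      have := intervalIntegral.norm_integral_le_of_norm_le_const
        (a := x n) (b := x (n+1)) (C := e / (2 * (b - a)))
        (f := fun s => f (t N n) - f s) ?_
      · rw [Real.norm_eq_abs] at this
        refine le_trans this ?_
        rw [abs_of_nonneg (by linarith [hxdiff, hdtpos] : (0:ℝ) ≤ x (n+1) - x n), hxdiff]
      · intro s hs
        rw [Set.uIoc_of_le (hxmono n)] at hs
        have hsIcc : s ∈ Set.Icc (x n) (x (n+1)) := ⟨hs.1.le, hs.2⟩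
        have htmem : t N n ∈ Set.Icc (x n) (x (n+1)) := by
          have := ht N n hN1 hn
          simpa [hx, hdt] using this
        have hdist : dist (t N n) s < δ := by
          rw [Real.dist_eq]
          have h1 := htmem.1; have h2 := htmem.2
          have h3 := hsIcc.1; have h4 := hsIcc.2
          have : |t N n - s| ≤ x (n+1) - x n := by
            rw [abs_sub_le_iff]; constructor <;> linarith
          rw [hxdiff] at this
          linarith
        have := hδ' (t N n) (htab N n hN1 hn) s (hsub n hn hsIcc) hdist
        rw [Real.dist_eq] at this
        rw [Real.norm_eq_abs]
        exact this.le
    rw [Real.dist_eq, hsplit, ← Finset.sum_sub_distrib]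
    calc |∑ n ∈ Finset.range N, (f (t N n) * dt - ∫ s in x n..x (n+1), f s)|
        ≤ ∑ n ∈ Finset.range N, |f (t N n) * dt - ∫ s in x n..x (n+1), f s| :=
          Finset.abs_sum_le_sum_abs _ _
      _ ≤ ∑ _n ∈ Finset.range N, e / (2 * (b - a)) * dt := Finset.sum_le_sum hterm
      _ = N * (e / (2 * (b - a)) * dt) := by rw [Finset.sum_const, Finset.card_range]; ring
      _ = e / 2 := by rw [hdt]; field_simp
      _ < e := by linarith
  -- log sums converge
  obtain ⟨N₁, hN₁⟩ := exists_nat_gt (2 * K)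
  have hsmall : ∀ N n : ℕ, max N₁ 1 ≤ N → n < N → |u N n| ≤ 1 / 2 := by
    intro N n hN hn
    have h1 : 1 ≤ N := le_trans (le_max_right _ _) hN
    have hNpos : (0:ℝ) < N := by exact_mod_cast h1
    refine le_trans (hubd N n h1 hn) ?_
    rw [div_le_div_iff₀ hNpos (by norm_num : (0:ℝ) < 2)]
    have : (N₁:ℝ) ≤ N := by exact_mod_cast le_trans (le_max_left _ _) hN
    linarith
  have hlog : ∀ N n : ℕ, max N₁ 1 ≤ N → n < N →
      |Real.log (1 + u N n) - u N n| ≤ 2 * (K / N) ^ 2 := by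
    intro N n hN hn
    have h1 : 1 ≤ N := le_trans (le_max_right _ _) hN
    have hsm := hsmall N n hN hn
    have habs : |(-(u N n))| < 1 := by rw [abs_neg]; linarith [hsm]
    have hkey := Real.abs_log_sub_add_sum_range_le habs 1
    simp only [Finset.sum_range_one, pow_one, Nat.cast_one] at hkey
    norm_num at hkey
    have h2 : (u N n) ^ 2 / (1 - |u N n|) ≤ 2 * (K / N) ^ 2 := by
      have hb1 : 1 - |u N n| ≥ 1/2 := by linarith [hsm]
      have hub := hubd N n h1 hn
      have hsq : (u N n) ^ 2 ≤ (K / N) ^ 2 := by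
        rw [← sq_abs]
        exact pow_le_pow_left₀ (abs_nonneg _) hub 2
      calc (u N n) ^ 2 / (1 - |u N n|) ≤ (u N n) ^ 2 / (1/2) := by
            apply div_le_div_of_nonneg_left (by positivity) (by norm_num) hb1
        _ = 2 * (u N n) ^ 2 := by ring
        _ ≤ 2 * (K / N) ^ 2 := by linarith
    refine le_trans (le_of_eq (by rw [show Real.log (1 + u N n) - u N n
      = -(u N n) + Real.log (1 + u N n) by ring])) (le_trans hkey h2)
  have hdiff : Tendsto (fun N : ℕ => (∑ n ∈ Finset.range N, Real.log (1 + u N n)) -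
      ∑ n ∈ Finset.range N, f (t N n) * ((b - a) / N)) atTop (nhds 0) := by
    apply squeeze_zero_norm' (a := fun N : ℕ => (2 * K ^ 2 + C) / N)
    · filter_upwards [eventually_ge_atTop (max N₁ 1)] with N hN
      have h1 : 1 ≤ N := le_trans (le_max_right _ _) hN
      have hNpos : (0:ℝ) < N := by exact_mod_cast h1
      rw [Real.norm_eq_abs, ← Finset.sum_sub_distrib]
      calc |∑ n ∈ Finset.range N, (Real.log (1 + u N n) - f (t N n) * ((b - a) / N))|
          ≤ ∑ n ∈ Finset.range N, |Real.log (1 + u N n) - f (t N n) * ((b - a) / N)| :=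
            Finset.abs_sum_le_sum_abs _ _
        _ ≤ ∑ _n ∈ Finset.range N, (2 * K ^ 2 + C) / N ^ 2 := by
            apply Finset.sum_le_sum
            intro n hn
            rw [Finset.mem_range] at hn
            have h3 : Real.log (1 + u N n) - f (t N n) * ((b - a) / N)
                = (Real.log (1 + u N n) - u N n) + ε N n := by
              rw [hu]; ring
            rw [h3]
            calc |(Real.log (1 + u N n) - u N n) + ε N n|
                ≤ |Real.log (1 + u N n) - u N n| + |ε N n| := abs_add_le _ _
              _ ≤ 2 * (K / N) ^ 2 + C / N ^ 2 := add_le_add (hlog N n hN hn) (hε N n h1 hn)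
              _ = (2 * K ^ 2 + C) / N ^ 2 := by field_simp
        _ = N * ((2 * K ^ 2 + C) / N ^ 2) := by rw [Finset.sum_const, Finset.card_range]; ring
        _ = (2 * K ^ 2 + C) / N := by field_simp
    · exact tendsto_const_div_atTop_nhds_zero_nat _
  have hsum : Tendsto (fun N : ℕ => ∑ n ∈ Finset.range N, Real.log (1 + u N n))
      atTop (nhds (∫ s in a..b, f s)) := by
    have := hS.add hdiff
    rw [add_zero] at this
    refine this.congr fun N => ?_
    ring
  -- conclude
  have hprod : ∀ᶠ N in atTop, Real.exp (∑ n ∈ Finset.range N, Real.log (1 + u N n)) =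
      ∏ n ∈ Finset.range N, (1 + f (t N n) * ((b - a) / N) + ε N n) := by
    filter_upwards [eventually_ge_atTop (max N₁ 1)] with N hN
    rw [Real.exp_sum]
    apply Finset.prod_congr rfl
    intro n hn
    rw [Finset.mem_range] at hn
    have hpos : 0 < 1 + u N n := by
      have hs2 := (abs_le.1 (hsmall N n hN hn)).1
      simp only [hu] at hs2 ⊢
      linarith
    rw [Real.exp_log hpos, hu]
    ring
  exact Tendsto.congr' hprod ((Real.continuous_exp.tendsto _).comp hsum)
end

section
/- Let a < b be reals, k ≥ 1, and let A, B, C : [a,b] → (k×k real matrices) be continuous with A(t) invertible for every t ∈ [a,b]. For each N ≥ 1 set dt = (b−a)/N and choose tags t_{N,n} ∈ [a + n·dt, a + (n+1)·dt] for 0 ≤ n ≤ N−1. Then for all sufficiently large N the matrices A(t_{N,n}) + C(t_{N,n})·dt are invertible for all n < N, and lim_{N→∞} ∏_{n=0}^{N−1} det(A(t_{N,n}) + B(t_{N,n})·dt) / det(A(t_{N,n}) + C(t_{N,n})·dt) = exp(∫_a^b tr(A(t)⁻¹·(B(t) − C(t))) dt). -/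
open Filter


open Filter Polynomial Matrix

namespace Stmt2Aux

noncomputable def nodes (k : ℕ) : Finset ℝ := (Finset.range (k + 1)).image (fun n : ℕ => (n : ℝ) + 1)

lemma nodes_card (k : ℕ) : (nodes k).card = k + 1 := by
  rw [nodes, Finset.card_image_of_injective _ (fun m n h => by exact_mod_cast (by linarith : (m:ℝ) = n)), Finset.card_range]

lemma nodes_ne_zero {k : ℕ} {x : ℝ} (hx : x ∈ nodes k) : x ≠ 0 := by
  rw [nodes, Finset.mem_image] at hx
  obtain ⟨n, _, rfl⟩ := hx
  show (n : ℝ) + 1 ≠ 0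
  positivity

noncomputable def Frem (k : ℕ) (M : Matrix (Fin k) (Fin k) ℝ) (r : ℝ) : ℝ :=
  ∑ x ∈ nodes k, (((1 + x • M).det - 1 - M.trace * x) / x ^ 2) *
    (Lagrange.basis (nodes k) id x).eval r

lemma det_expand {k : ℕ} (M : Matrix (Fin k) (Fin k) ℝ) (r : ℝ) :
    (1 + r • M).det = 1 + M.trace * r + Frem k M r * r ^ 2 := by
  have base : ∀ u : ℝ, (1 + u • M).det
      = 1 + M.trace * u + ((det (1 + (X : ℝ[X]) • M.map C)).divX.divX).eval u * u ^ 2 :=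
    fun u => Matrix.det_one_add_smul u M
  set P := (det (1 + (X : ℝ[X]) • M.map C)).divX.divX with hP
  have hQdeg : (det (1 + (X : ℝ[X]) • M.map C)).natDegree ≤ k := by
    have h1 : ((1 : Matrix (Fin k) (Fin k) ℝ)).map (C : ℝ →+* ℝ[X])
        = (1 : Matrix (Fin k) (Fin k) ℝ[X]) :=
      Matrix.map_one _ (map_zero C) (map_one C)
    have := Polynomial.natDegree_det_X_add_C_le (n := Fin k) (α := ℝ) M 1
    rw [h1] at this
    simpa [add_comm, Fintype.card_fin] using this
  have hdeg : P.degree < ((nodes k).card : ℕ) := by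
    rw [nodes_card]
    have h2 : P.natDegree ≤ k :=
      le_trans natDegree_divX_le (le_trans natDegree_divX_le hQdeg)
    calc P.degree ≤ (P.natDegree : WithBot ℕ) := degree_le_natDegree
      _ < ((k + 1 : ℕ) : WithBot ℕ) := by exact_mod_cast Nat.lt_succ_of_le h2
  have hinj : Set.InjOn (id : ℝ → ℝ) ((nodes k) : Set ℝ) := Function.injective_id.injOn
  have hinterp := Lagrange.eq_interpolate (v := id) hinj hdeg
  have heval : P.eval r = ∑ x ∈ nodes k, P.eval x * (Lagrange.basis (nodes k) id x).eval r := by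
    conv_lhs => rw [hinterp]
    rw [Lagrange.interpolate_apply, Polynomial.eval_finset_sum]
    simp
  have hnode : ∀ x ∈ nodes k, P.eval x = ((1 + x • M).det - 1 - M.trace * x) / x ^ 2 := by
    intro x hx
    have hx0 : (x : ℝ) ^ 2 ≠ 0 := pow_ne_zero 2 (nodes_ne_zero hx)
    rw [eq_div_iff hx0]
    have := base x
    linarith
  have hFr : Frem k M r = P.eval r := by
    rw [Frem, heval]
    exact Finset.sum_congr rfl (fun x hx => by rw [hnode x hx])
  rw [base r, hFr]

lemma Frem_continuous (k : ℕ) :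
    Continuous (fun p : Matrix (Fin k) (Fin k) ℝ × ℝ => Frem k p.1 p.2) := by
  unfold Frem
  refine continuous_finset_sum _ (fun x _ => ?_)
  refine Continuous.mul ?_ ((Polynomial.continuous _).comp continuous_snd)
  refine Continuous.div_const ?_ _
  refine Continuous.sub (Continuous.sub ?_ continuous_const) ?_
  · exact (continuous_const.add (continuous_fst.const_smul x)).matrix_det
  · exact continuous_fst.matrix_trace.mul continuous_const

lemma log_one_add_est {x : ℝ} (hx : |x| ≤ 1/2) : |Real.log (1 + x) - x| ≤ 2 * x ^ 2 := by
  have h1 : |(-x)| < 1 := by rw [abs_neg]; linarith [abs_nonneg x]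
  have h2 := Real.abs_log_sub_add_sum_range_le h1 1
  simp only [Finset.sum_range_one, pow_one, Nat.cast_zero, zero_add, div_one, sub_neg_eq_add,
    abs_neg, even_two, Even.neg_pow] at h2
  have h3 : |Real.log (1 + x) - x| = |(-x) + Real.log (1 + x)| := by
    congr 1; ring
  have h4 : |x| ^ 2 / (1 - |x|) ≤ 2 * x ^ 2 := by
    have h5 : (0:ℝ) < 1/2 := by norm_num
    have h6 : (1:ℝ)/2 ≤ 1 - |x| := by linarith
    calc |x| ^ 2 / (1 - |x|) ≤ |x| ^ 2 / (1/2) :=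
          div_le_div_of_nonneg_left (by positivity) h5 h6
      _ = 2 * x ^ 2 := by rw [sq_abs]; ring
  rw [h3]
  exact le_trans h2 h4

end Stmt2Aux

namespace Stmt2Aux

lemma riemann_sum {a b : ℝ} (hab : a < b) {f : ℝ → ℝ}
    (hf : ContinuousOn f (Set.Icc a b)) (t : ℕ → ℕ → ℝ)
    (ht : ∀ N n : ℕ, 1 ≤ N → n < N →
      t N n ∈ Set.Icc (a + (n : ℝ) * ((b - a) / N)) (a + ((n : ℝ) + 1) * ((b - a) / N))) :
    Tendsto (fun N : ℕ => ∑ n ∈ Finset.range N, ((b - a) / N) * f (t N n)) atTop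
      (nhds (∫ s in a..b, f s)) := by
  rw [Metric.tendsto_atTop]
  intro ε hε
  have hba : 0 < b - a := sub_pos.2 hab
  set ε' : ℝ := ε / (2 * (b - a)) with hε'def
  have hε' : 0 < ε' := by positivity
  have huc : UniformContinuousOn f (Set.Icc a b) :=
    isCompact_Icc.uniformContinuousOn_of_continuous hf
  rw [Metric.uniformContinuousOn_iff] at huc
  obtain ⟨δ, hδ, hδf⟩ := huc ε' hε'
  obtain ⟨N₁, hN₁⟩ := exists_nat_gt ((b - a) / δ)
  refine ⟨N₁ + 1, fun N hN => ?_⟩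
  have hN1 : 1 ≤ N := le_trans (Nat.le_add_left 1 N₁) hN
  have hNpos : (0:ℝ) < N := by exact_mod_cast Nat.lt_of_lt_of_le Nat.zero_lt_one hN1
  set dt := (b - a) / (N:ℝ) with hdt
  have hdtpos : 0 < dt := by positivity
  have hdtδ : dt < δ := by
    have hN' : (b - a) / δ < N := lt_of_lt_of_le hN₁ (by exact_mod_cast le_trans (Nat.le_add_right N₁ 1) hN)
    rw [hdt, div_lt_iff₀ hNpos]
    calc b - a = ((b - a) / δ) * δ := by field_simp
      _ < (N:ℝ) * δ := mul_lt_mul_of_pos_right hN' hδ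
      _ = δ * N := mul_comm _ _
  set x : ℕ → ℝ := fun n => a + n * dt with hx
  have hx0 : x 0 = a := by simp [hx]
  have hNdt : (N:ℝ) * dt = b - a := by rw [hdt]; field_simp
  have hxN : x N = b := by simp only [hx]; rw [hNdt]; ring
  have hxmem : ∀ n ≤ N, x n ∈ Set.Icc a b := by
    intro n hn
    constructor
    · have h1 : 0 ≤ (n:ℝ) * dt := by positivity
      simp only [hx]; linarith
    · have h1 : (n:ℝ) * dt ≤ N * dt :=
        mul_le_mul_of_nonneg_right (by exact_mod_cast hn) hdtpos.le
      simp only [hx]; linarith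
  have hsub : ∀ n < N, Set.Icc (x n) (x (n+1)) ⊆ Set.Icc a b := fun n hn =>
    Set.Icc_subset_Icc (hxmem n hn.le).1 (hxmem (n+1) hn).2
  have hle : ∀ n : ℕ, x n ≤ x (n+1) := by
    intro n
    simp only [hx]
    push_cast
    nlinarith [hdtpos]
  have hxdiff : ∀ n : ℕ, x (n+1) - x n = dt := by
    intro n; simp only [hx]; push_cast; ring
  have hint : ∀ n < N, IntervalIntegrable f MeasureTheory.volume (x n) (x (n+1)) := by
    intro n hn
    apply ContinuousOn.intervalIntegrable
    apply hf.mono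
    rw [Set.uIcc_of_le (hle n)]
    exact hsub n hn
  have hsplit : ∑ n ∈ Finset.range N, ∫ s in x n..x (n+1), f s = ∫ s in a..b, f s := by
    rw [intervalIntegral.sum_integral_adjacent_intervals hint, hx0, hxN]
  have htag : ∀ n < N, t N n ∈ Set.Icc (x n) (x (n+1)) := by
    intro n hn
    have h1 := ht N n hN1 hn
    simp only [hx]
    push_cast
    exact h1
  have hterm : ∀ n < N, |dt * f (t N n) - ∫ s in x n..x (n+1), f s| ≤ ε' * dt := by
    intro n hn
    have h1 : (∫ _ in x n..x (n+1), f (t N n)) = dt * f (t N n) := by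
      rw [intervalIntegral.integral_const, smul_eq_mul, hxdiff n]
    have h2 : dt * f (t N n) - (∫ s in x n..x (n+1), f s)
        = ∫ s in x n..x (n+1), (f (t N n) - f s) := by
      rw [intervalIntegral.integral_sub intervalIntegrable_const (hint n hn), h1]
    rw [h2]
    have h3 : ∀ s ∈ Set.uIoc (x n) (x (n+1)), ‖f (t N n) - f s‖ ≤ ε' := by
      intro s hs
      rw [Set.uIoc_of_le (hle n)] at hs
      have hs' : s ∈ Set.Icc (x n) (x (n+1)) := ⟨hs.1.le, hs.2⟩
      have hts : dist (t N n) s < δ := by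
        rw [Real.dist_eq]
        have htg := htag n hn
        have : |t N n - s| ≤ x (n+1) - x n := by
          rw [abs_le]
          constructor <;> [linarith [htg.1, hs'.2]; linarith [htg.2, hs'.1]]
        rw [hxdiff n] at this
        linarith
      have := hδf _ (hsub n hn (htag n hn)) _ (hsub n hn hs') hts
      rw [Real.dist_eq] at this
      rw [Real.norm_eq_abs]
      exact this.le
    have h4 := intervalIntegral.norm_integral_le_of_norm_le_const h3
    rw [Real.norm_eq_abs, hxdiff n, abs_of_nonneg hdtpos.le] at h4
    exact h4
  rw [Real.dist_eq]
  have hsum : |(∑ n ∈ Finset.range N, dt * f (t N n)) - ∫ s in a..b, f s| ≤ ε' * (b - a) := by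
    rw [← hsplit, ← Finset.sum_sub_distrib]
    calc |∑ n ∈ Finset.range N, (dt * f (t N n) - ∫ s in x n..x (n+1), f s)|
        ≤ ∑ n ∈ Finset.range N, |dt * f (t N n) - ∫ s in x n..x (n+1), f s| :=
          Finset.abs_sum_le_sum_abs _ _
      _ ≤ ∑ _n ∈ Finset.range N, ε' * dt :=
          Finset.sum_le_sum (fun n hn => hterm n (Finset.mem_range.1 hn))
      _ = (N:ℝ) * (ε' * dt) := by
          rw [Finset.sum_const, Finset.card_range, nsmul_eq_mul]
      _ = ε' * (b - a) := by rw [← hNdt]; ring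
  have : ε' * (b - a) = ε / 2 := by rw [hε'def]; field_simp
  calc |(∑ n ∈ Finset.range N, dt * f (t N n)) - ∫ s in a..b, f s| ≤ ε' * (b - a) := hsum
    _ = ε / 2 := this
    _ < ε := by linarith

end Stmt2Aux


open Stmt2Aux in
set_option maxHeartbeats 2000000 in
/-- Let `a < b`, `k ≥ 1`, and `A B C : [a,b] → Mat_{k×k}(ℝ)` continuous with
`A t` invertible for every `t ∈ [a,b]`. For each `N ≥ 1` let `dt = (b-a)/N` and choose tags
`t N n ∈ [a + n·dt, a + (n+1)·dt]`. Then for all sufficiently large `N` the matrices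
`A (t N n) + dt • C (t N n)` are invertible for all `n < N`, and
`∏_{n=0}^{N-1} det (A (t N n) + dt • B (t N n)) / det (A (t N n) + dt • C (t N n))`
converges to `exp (∫_a^b tr (A(s)⁻¹ (B(s) − C(s))) ds)` as `N → ∞`. -/
theorem stmt_2 (a b : ℝ) (hab : a < b) (k : ℕ) (hk : 1 ≤ k)
    (A B C : ℝ → Matrix (Fin k) (Fin k) ℝ)
    (hA : ContinuousOn A (Set.Icc a b))
    (hB : ContinuousOn B (Set.Icc a b))
    (hC : ContinuousOn C (Set.Icc a b))
    (hAinv : ∀ s ∈ Set.Icc a b, IsUnit (A s).det)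
    (t : ℕ → ℕ → ℝ)
    (ht : ∀ N n : ℕ, 1 ≤ N → n < N →
      t N n ∈ Set.Icc (a + (n : ℝ) * ((b - a) / N)) (a + ((n : ℝ) + 1) * ((b - a) / N))) :
    (∀ᶠ N : ℕ in atTop, ∀ n < N,
        IsUnit (A (t N n) + ((b - a) / (N : ℝ)) • C (t N n)).det) ∧
    Tendsto (fun N : ℕ => ∏ n ∈ Finset.range N,
        (A (t N n) + ((b - a) / (N : ℝ)) • B (t N n)).det /
          (A (t N n) + ((b - a) / (N : ℝ)) • C (t N n)).det)
      atTop (nhds (Real.exp (∫ s in a..b, ((A s)⁻¹ * (B s - C s)).trace))) := by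
  classical
  have hba : 0 < b - a := sub_pos.2 hab
  have hdet_ne : ∀ s ∈ Set.Icc a b, (A s).det ≠ 0 := fun s hs => (hAinv s hs).ne_zero
  -- tags lie in [a, b]
  have htmem : ∀ N n : ℕ, 1 ≤ N → n < N → t N n ∈ Set.Icc a b := by
    intro N n hN hn
    obtain ⟨h1, h2⟩ := ht N n hN hn
    have hNpos : (0:ℝ) < N := by exact_mod_cast Nat.lt_of_lt_of_le Nat.zero_lt_one hN
    have hdtpos : 0 < (b - a) / (N:ℝ) := by positivity
    constructor
    · have : 0 ≤ (n:ℝ) * ((b - a) / N) := by positivity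
      linarith
    · have hn' : (n:ℝ) + 1 ≤ N := by exact_mod_cast hn
      have h3 : ((n:ℝ) + 1) * ((b - a) / N) ≤ (N:ℝ) * ((b - a) / N) :=
        mul_le_mul_of_nonneg_right hn' hdtpos.le
      have h4 : (N:ℝ) * ((b - a) / N) = b - a := by field_simp
      linarith
  -- continuity of s ↦ (A s)⁻¹ and of MB, MC
  have hcontAinv : ContinuousOn (fun s => (A s)⁻¹) (Set.Icc a b) := by
    have h1 : ContinuousOn (fun s => ((A s).det)⁻¹ • (A s).adjugate) (Set.Icc a b) :=
      ContinuousOn.smul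
        ((continuous_id.matrix_det.comp_continuousOn hA).inv₀ hdet_ne)
        (continuous_id.matrix_adjugate.comp_continuousOn hA)
    refine h1.congr (fun s _ => ?_)
    rw [Matrix.inv_def, Ring.inverse_eq_inv']
  set MB : ℝ → Matrix (Fin k) (Fin k) ℝ := fun s => (A s)⁻¹ * B s with hMBdef
  set MC : ℝ → Matrix (Fin k) (Fin k) ℝ := fun s => (A s)⁻¹ * C s with hMCdef
  have hmulc : Continuous (fun p : Matrix (Fin k) (Fin k) ℝ × Matrix (Fin k) (Fin k) ℝ => p.1 * p.2) :=
    continuous_fst.matrix_mul continuous_snd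
  have hMBc : ContinuousOn MB (Set.Icc a b) :=
    hmulc.comp_continuousOn (hcontAinv.prodMk hB)
  have hMCc : ContinuousOn MC (Set.Icc a b) :=
    hmulc.comp_continuousOn (hcontAinv.prodMk hC)
  -- factorization
  have hfact : ∀ s ∈ Set.Icc a b, ∀ (X : ℝ → Matrix (Fin k) (Fin k) ℝ) (h : ℝ),
      A s + h • X s = A s * (1 + h • ((A s)⁻¹ * X s)) := by
    intro s hs X h
    rw [mul_add, mul_one, Matrix.mul_smul, ← Matrix.mul_assoc,
      Matrix.mul_nonsing_inv _ (hAinv s hs), one_mul]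
  -- uniform bound R
  set K : Set (ℝ × ℝ) := (Set.Icc a b) ×ˢ (Set.Icc (-1:ℝ) 1) with hKdef
  have hKc : IsCompact K := isCompact_Icc.prod isCompact_Icc
  set g : ℝ × ℝ → ℝ := fun p =>
    |(MB p.1).trace| + |(MC p.1).trace| + |Frem k (MB p.1) p.2| + |Frem k (MC p.1) p.2| with hgdef
  have hgc : ContinuousOn g K := by
    have hfst : ContinuousOn (fun p : ℝ × ℝ => p.1) K := continuousOn_fst
    have hmem : ∀ p ∈ K, p.1 ∈ Set.Icc a b := fun p hp => hp.1
    have hMB' : ContinuousOn (fun p : ℝ × ℝ => MB p.1) K := hMBc.comp hfst hmem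
    have hMC' : ContinuousOn (fun p : ℝ × ℝ => MC p.1) K := hMCc.comp hfst hmem
    have htr : Continuous (fun M : Matrix (Fin k) (Fin k) ℝ => M.trace) :=
      continuous_id.matrix_trace
    refine ContinuousOn.add (ContinuousOn.add (ContinuousOn.add ?_ ?_) ?_) ?_
    · exact (htr.comp_continuousOn hMB').abs
    · exact (htr.comp_continuousOn hMC').abs
    · exact ((Frem_continuous k).comp_continuousOn (hMB'.prodMk continuousOn_snd)).abs
    · exact ((Frem_continuous k).comp_continuousOn (hMC'.prodMk continuousOn_snd)).abs
  obtain ⟨R, hR⟩ := hKc.exists_bound_of_continuousOn hgc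
  have haK : ((a, 0) : ℝ × ℝ) ∈ K := ⟨⟨le_refl a, hab.le⟩, by norm_num⟩
  have hR0 : 0 ≤ R := le_trans (norm_nonneg _) (hR (a, 0) haK)
  have hbound : ∀ s ∈ Set.Icc a b, ∀ h : ℝ, |h| ≤ 1 →
      |(MB s).trace| ≤ R ∧ |(MC s).trace| ≤ R ∧ |Frem k (MB s) h| ≤ R ∧ |Frem k (MC s) h| ≤ R := by
    intro s hs h hh
    have hp : ((s, h) : ℝ × ℝ) ∈ K := ⟨hs, abs_le.1 hh⟩
    have h1 := hR (s, h) hp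
    rw [Real.norm_eq_abs, abs_of_nonneg (by positivity)] at h1
    simp only [hgdef] at h1
    refine ⟨?_, ?_, ?_, ?_⟩ <;>
      [skip; skip; skip; skip] <;>
      nlinarith [abs_nonneg (MB s).trace, abs_nonneg (MC s).trace,
        abs_nonneg (Frem k (MB s) h), abs_nonneg (Frem k (MC s) h)]
  set K₂ : ℝ := 8 * R ^ 2 + R with hK₂def
  set δ₀ : ℝ := min 1 (1 / (4 * R + 1)) with hδ₀def
  have hδ₀pos : 0 < δ₀ := lt_min one_pos (by positivity)
  have hδ₀le1 : δ₀ ≤ 1 := min_le_left _ _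
  -- core estimate
  have hcore : ∀ (M : Matrix (Fin k) (Fin k) ℝ) (h : ℝ), |h| ≤ δ₀ →
      |M.trace| ≤ R → |Frem k M h| ≤ R →
      (1/2 : ℝ) ≤ (1 + h • M).det ∧
        |Real.log ((1 + h • M).det) - h * M.trace| ≤ K₂ * h ^ 2 := by
    intro M h hh htr hF
    have hh1 : |h| ≤ 1 := le_trans hh hδ₀le1
    have hh2 : |h| ≤ 1 / (4 * R + 1) := le_trans hh (min_le_right _ _)
    set x : ℝ := M.trace * h + Frem k M h * h ^ 2 with hxdef
    have hdet : (1 + h • M).det = 1 + x := by rw [det_expand]; ring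
    have hsq : h ^ 2 ≤ |h| := by nlinarith [sq_abs h, abs_nonneg h]
    have h4 : |x| ≤ 2 * R * |h| := by
      have h2 : |x| ≤ R * |h| + R * h ^ 2 := by
        calc |x| ≤ |M.trace * h| + |Frem k M h * h ^ 2| := abs_add_le _ _
          _ = |M.trace| * |h| + |Frem k M h| * h ^ 2 := by
              rw [abs_mul, abs_mul, abs_pow, sq_abs]
          _ ≤ R * |h| + R * h ^ 2 :=
              add_le_add (mul_le_mul_of_nonneg_right htr (abs_nonneg h))
                (mul_le_mul_of_nonneg_right hF (sq_nonneg h))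
      nlinarith [mul_le_mul_of_nonneg_left hsq hR0]
    have hx1 : |x| ≤ 1/2 := by
      have h5 : 2 * R * |h| ≤ 2 * R * (1 / (4 * R + 1)) :=
        mul_le_mul_of_nonneg_left hh2 (by positivity)
      have h6 : 2 * R * (1 / (4 * R + 1)) ≤ 1/2 := by
        rw [mul_one_div, div_le_div_iff₀ (by positivity) (by norm_num)]
        linarith
      linarith
    constructor
    · rw [hdet]; linarith [(abs_le.1 hx1).1]
    · have hlog := log_one_add_est hx1
      rw [hdet]
      have h7 : |Real.log (1 + x) - h * M.trace|
          ≤ |Real.log (1 + x) - x| + |x - h * M.trace| := abs_sub_le _ _ _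
      have h8 : |x - h * M.trace| ≤ R * h ^ 2 := by
        have : x - h * M.trace = Frem k M h * h ^ 2 := by rw [hxdef]; ring
        rw [this, abs_mul, abs_pow, sq_abs]
        exact mul_le_mul_of_nonneg_right hF (sq_nonneg h)
      have h9 : x ^ 2 ≤ 4 * R ^ 2 * h ^ 2 := by nlinarith [sq_abs x, sq_abs h, abs_nonneg x]
      rw [hK₂def]
      nlinarith
  -- the good-N event
  have hdt0 : Tendsto (fun N : ℕ => (b - a) / (N:ℝ)) atTop (nhds 0) :=
    tendsto_const_div_atTop_nhds_zero_nat _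
  have hev : ∀ᶠ N : ℕ in atTop, 1 ≤ N ∧ (b - a) / (N:ℝ) ≤ δ₀ := by
    filter_upwards [eventually_ge_atTop 1, hdt0.eventually (gt_mem_nhds hδ₀pos)] with N h1 h2
    exact ⟨h1, h2.le⟩
  -- per-N facts for good N
  have hgood : ∀ N : ℕ, 1 ≤ N → (b - a) / (N:ℝ) ≤ δ₀ → ∀ n < N,
      ((1/2 : ℝ) ≤ (1 + ((b - a) / (N:ℝ)) • MB (t N n)).det ∧
       (1/2 : ℝ) ≤ (1 + ((b - a) / (N:ℝ)) • MC (t N n)).det) ∧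
      ((A (t N n) + ((b - a) / (N:ℝ)) • B (t N n)).det
          = (A (t N n)).det * (1 + ((b - a) / (N:ℝ)) • MB (t N n)).det ∧
       (A (t N n) + ((b - a) / (N:ℝ)) • C (t N n)).det
          = (A (t N n)).det * (1 + ((b - a) / (N:ℝ)) • MC (t N n)).det) ∧
      (|Real.log ((1 + ((b - a) / (N:ℝ)) • MB (t N n)).det)
          - ((b - a) / (N:ℝ)) * (MB (t N n)).trace| ≤ K₂ * ((b - a) / (N:ℝ)) ^ 2 ∧
       |Real.log ((1 + ((b - a) / (N:ℝ)) • MC (t N n)).det)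
          - ((b - a) / (N:ℝ)) * (MC (t N n)).trace| ≤ K₂ * ((b - a) / (N:ℝ)) ^ 2) := by
    intro N hN hNδ n hn
    set h : ℝ := (b - a) / (N:ℝ) with hhdef
    have hNpos : (0:ℝ) < N := by exact_mod_cast Nat.lt_of_lt_of_le Nat.zero_lt_one hN
    have hpos : 0 < h := by rw [hhdef]; positivity
    have habs : |h| ≤ δ₀ := by rw [abs_of_nonneg hpos.le]; exact hNδ
    have habs1 : |h| ≤ 1 := le_trans habs hδ₀le1
    have hs : t N n ∈ Set.Icc a b := htmem N n hN hn
    obtain ⟨hb1, hb2, hb3, hb4⟩ := hbound (t N n) hs h habs1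
    obtain ⟨hcB1, hcB2⟩ := hcore (MB (t N n)) h habs hb1 hb3
    obtain ⟨hcC1, hcC2⟩ := hcore (MC (t N n)) h habs hb2 hb4
    refine ⟨⟨hcB1, hcC1⟩, ⟨?_, ?_⟩, hcB2, hcC2⟩
    · rw [hfact (t N n) hs B h, det_mul]
    · rw [hfact (t N n) hs C h, det_mul]
  -- Goal 1
  have goal1 : ∀ᶠ N : ℕ in atTop, ∀ n < N,
      IsUnit (A (t N n) + ((b - a) / (N : ℝ)) • C (t N n)).det := by
    filter_upwards [hev] with N hNgood
    intro n hn
    obtain ⟨⟨_, hDC⟩, ⟨_, hfC⟩, _⟩ := hgood N hNgood.1 hNgood.2 n hn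
    rw [isUnit_iff_ne_zero, hfC]
    exact mul_ne_zero (hdet_ne _ (htmem N n hNgood.1 hn)) (by linarith)
  refine ⟨goal1, ?_⟩
  -- Goal 2
  set f : ℝ → ℝ := fun s => ((A s)⁻¹ * (B s - C s)).trace with hfdef
  have hfsplit : ∀ s, f s = (MB s).trace - (MC s).trace := by
    intro s
    simp only [hfdef, hMBdef, hMCdef]
    rw [Matrix.mul_sub, Matrix.trace_sub]
  have hfc : ContinuousOn f (Set.Icc a b) := by
    have htr : Continuous (fun M : Matrix (Fin k) (Fin k) ℝ => M.trace) :=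
      continuous_id.matrix_trace
    refine ContinuousOn.congr (ContinuousOn.sub (htr.comp_continuousOn hMBc)
      (htr.comp_continuousOn hMCc)) (fun s _ => ?_)
    rw [hfsplit s]; rfl
  set Rm : ℕ → ℝ := fun N => ∑ n ∈ Finset.range N, ((b - a) / (N:ℝ)) * f (t N n) with hRmdef
  have hRm : Tendsto Rm atTop (nhds (∫ s in a..b, f s)) := riemann_sum hab hfc t ht
  set S : ℕ → ℝ := fun N => ∑ n ∈ Finset.range N,
      (Real.log ((1 + ((b - a) / (N:ℝ)) • MB (t N n)).det)
        - Real.log ((1 + ((b - a) / (N:ℝ)) • MC (t N n)).det)) with hSdef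
  have hSR : ∀ᶠ N : ℕ in atTop, |S N - Rm N| ≤ (2 * K₂ * (b - a)) * ((b - a) / (N:ℝ)) := by
    filter_upwards [hev] with N hNgood
    obtain ⟨hN1, hNδ⟩ := hNgood
    set h : ℝ := (b - a) / (N:ℝ) with hhdef
    have hNpos : (0:ℝ) < N := by exact_mod_cast Nat.lt_of_lt_of_le Nat.zero_lt_one hN1
    have hNdt : (N:ℝ) * h = b - a := by rw [hhdef]; field_simp
    have hterm : ∀ n < N,
        |(Real.log ((1 + h • MB (t N n)).det) - Real.log ((1 + h • MC (t N n)).det))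
          - h * f (t N n)| ≤ 2 * K₂ * h ^ 2 := by
      intro n hn
      obtain ⟨_, _, hest⟩ := hgood N hN1 hNδ n hn
      have heq : (Real.log ((1 + h • MB (t N n)).det) - Real.log ((1 + h • MC (t N n)).det))
          - h * f (t N n)
          = (Real.log ((1 + h • MB (t N n)).det) - h * (MB (t N n)).trace)
            - (Real.log ((1 + h • MC (t N n)).det) - h * (MC (t N n)).trace) := by
        rw [hfsplit]; ring
      rw [heq]
      calc |(Real.log ((1 + h • MB (t N n)).det) - h * (MB (t N n)).trace)
            - (Real.log ((1 + h • MC (t N n)).det) - h * (MC (t N n)).trace)|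
          ≤ |Real.log ((1 + h • MB (t N n)).det) - h * (MB (t N n)).trace|
            + |Real.log ((1 + h • MC (t N n)).det) - h * (MC (t N n)).trace| := abs_sub _ _
        _ ≤ K₂ * h ^ 2 + K₂ * h ^ 2 := add_le_add hest.1 hest.2
        _ = 2 * K₂ * h ^ 2 := by ring
    have hdiff : S N - Rm N = ∑ n ∈ Finset.range N,
        ((Real.log ((1 + h • MB (t N n)).det) - Real.log ((1 + h • MC (t N n)).det))
          - h * f (t N n)) := by
      rw [hSdef, hRmdef, ← Finset.sum_sub_distrib]
    rw [hdiff]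
    calc |∑ n ∈ Finset.range N,
          ((Real.log ((1 + h • MB (t N n)).det) - Real.log ((1 + h • MC (t N n)).det))
            - h * f (t N n))|
        ≤ ∑ n ∈ Finset.range N,
          |(Real.log ((1 + h • MB (t N n)).det) - Real.log ((1 + h • MC (t N n)).det))
            - h * f (t N n)| := Finset.abs_sum_le_sum_abs _ _
      _ ≤ ∑ _n ∈ Finset.range N, 2 * K₂ * h ^ 2 :=
          Finset.sum_le_sum (fun n hn => hterm n (Finset.mem_range.1 hn))
      _ = (N:ℝ) * (2 * K₂ * h ^ 2) := by
          rw [Finset.sum_const, Finset.card_range, nsmul_eq_mul]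
      _ = (2 * K₂ * (b - a)) * h := by rw [← hNdt]; ring
  have hK₂0 : 0 ≤ K₂ := by rw [hK₂def]; positivity
  have hbt : Tendsto (fun N : ℕ => (2 * K₂ * (b - a)) * ((b - a) / (N:ℝ))) atTop (nhds 0) := by
    have := hdt0.const_mul (2 * K₂ * (b - a))
    simpa using this
  have hS0 : Tendsto (fun N => S N - Rm N) atTop (nhds 0) := by
    refine tendsto_of_tendsto_of_tendsto_of_le_of_le' (by simpa using hbt.neg) hbt ?_ ?_
    · filter_upwards [hSR] with N hN
      linarith [(abs_le.1 hN).1]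
    · filter_upwards [hSR] with N hN
      linarith [(abs_le.1 hN).2]
  have hS : Tendsto S atTop (nhds (∫ s in a..b, f s)) := by
    have h1 := hS0.add hRm
    rw [zero_add] at h1
    refine h1.congr (fun N => ?_)
    ring
  have hPS : ∀ᶠ N : ℕ in atTop,
      (∏ n ∈ Finset.range N,
        (A (t N n) + ((b - a) / (N : ℝ)) • B (t N n)).det /
          (A (t N n) + ((b - a) / (N : ℝ)) • C (t N n)).det) = Real.exp (S N) := by
    filter_upwards [hev] with N hNgood
    obtain ⟨hN1, hNδ⟩ := hNgood
    rw [hSdef, Real.exp_sum]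
    refine Finset.prod_congr rfl (fun n hn => ?_)
    have hn' := Finset.mem_range.1 hn
    obtain ⟨⟨hDB, hDC⟩, ⟨hfB, hfC⟩, _⟩ := hgood N hN1 hNδ n hn'
    rw [hfB, hfC, mul_div_mul_left _ _ (hdet_ne _ (htmem N n hN1 hn')),
      Real.exp_sub, Real.exp_log (by linarith), Real.exp_log (by linarith)]
  refine Tendsto.congr' (EventuallyEq.symm hPS) ?_
  exact (Real.continuous_exp.continuousAt.tendsto.comp hS)
end

section
/- Fix d ≥ 1, m > 0 and q ∈ ℝ. Let g be a coordinate metric on ℝ^{d+1} with Christoffel symbols Γ^μ_{αβ}, and let F_{μν} : ℝ^{d+1} → ℝ be antisymmetric (F_{μν} = −F_{νμ}); set F^μ_ν(x) := g^{μρ}(x)F_{ρν}(x). Suppose x, p : ℝ → ℝ^{d+1} are differentiable and satisfy, for all τ and all μ: dx^μ/dτ = p^μ/m and dp^μ/dτ = (q/m)·F^μ_ν(x(τ))·p^ν − (1/m)·Γ^μ_{αβ}(x(τ))·p^α p^β. Then the function τ ↦ g_{μν}(x(τ))·p^μ(τ)·p^ν(τ) is constant; in particular, a trajectory starting on the mass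 shell g_{μν}p^μp^ν = −m² remains on it for all τ. -/
/-- The Christoffel symbols `Γ^μ_{αβ} = ½ g^{μρ} (∂_α g_{ρβ} + ∂_β g_{ρα} − ∂_ρ g_{αβ})`
of a coordinate metric `g`, expressed via the array `Dg` of partial derivatives of `g`
(`Dg y α ρ β = ∂_α g_{ρβ}(y)`). -/
noncomputable def Christoffel (d : ℕ)
    (g : (Fin (d + 1) → ℝ) → Matrix (Fin (d + 1)) (Fin (d + 1)) ℝ)
    (Dg : (Fin (d + 1) → ℝ) → Fin (d + 1) → Fin (d + 1) → Fin (d + 1) → ℝ)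
    (y : Fin (d + 1) → ℝ) (μ α β : Fin (d + 1)) : ℝ :=
  (1 / 2) * ∑ ρ, (g y)⁻¹ μ ρ * (Dg y α ρ β + Dg y β ρ α - Dg y ρ α β)

open Finset



lemma anti_contract (n : ℕ) (Fm : Matrix (Fin n) (Fin n) ℝ)
    (hF : ∀ μ ν, Fm μ ν = -Fm ν μ) (A : Fin n → ℝ) :
    ∑ a, ∑ b, Fm a b * A a * A b = 0 := by
  have h : (∑ a, ∑ b, Fm a b * A a * A b) = -(∑ a, ∑ b, Fm a b * A a * A b) := by
    nth_rewrite 2 [Finset.sum_comm]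
    rw [← Finset.sum_neg_distrib]
    refine Finset.sum_congr rfl fun a _ => ?_
    rw [← Finset.sum_neg_distrib]
    refine Finset.sum_congr rfl fun b _ => ?_
    rw [hF a b]; ring
  linarith

lemma shell_alg (n : ℕ) (m q : ℝ)
    (G Gi Fm : Matrix (Fin n) (Fin n) ℝ) (D : Fin n → Fin n → Fin n → ℝ) (A P : Fin n → ℝ)
    (hGsymm : ∀ μ ν, G μ ν = G ν μ)
    (hGGi : ∀ ν ρ, (∑ μ, G μ ν * Gi μ ρ) = if ν = ρ then 1 else 0)
    (hF : ∀ μ ν, Fm μ ν = -Fm ν μ)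
    (hP : ∀ μ, P μ = q / m * ∑ ν, (∑ ρ, Gi μ ρ * Fm ρ ν) * A ν
        - 1 / m * ∑ α, ∑ β, ((1/2) * ∑ ρ, Gi μ ρ * (D α ρ β + D β ρ α - D ρ α β)) * A α * A β) :
    ∑ μ, ∑ ν, ((∑ α, D α μ ν * (A α / m)) * A μ * A ν
      + (G μ ν * P μ * A ν + G μ ν * A μ * P ν)) = 0 := by
  -- abbreviation for the symmetrized derivative combination, kept atomic
  set E : Fin n → Fin n → Fin n → ℝ :=
    fun α ρ β => D α ρ β + D β ρ α - D ρ α β with hEdef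
  have hEapp : ∀ a r b, E a r b = D a r b + D b r a - D r a b := fun _ _ _ => rfl
  have hP' : ∀ μ, P μ = q / m * ∑ ν, (∑ ρ, Gi μ ρ * Fm ρ ν) * A ν
      - 1 / m * ∑ α, ∑ β, ((1/2) * ∑ ρ, Gi μ ρ * E α ρ β) * A α * A β := by
    intro μ; rw [hP μ]
  set Q : Fin n → ℝ := fun ρ => q / m * (∑ σ, Fm ρ σ * A σ)
      - 1 / m * ∑ α, ∑ β, (1/2) * E α ρ β * A α * A β with hQ
  have hPQ : ∀ μ, P μ = ∑ ρ, Gi μ ρ * Q ρ := by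
    intro μ
    rw [hP' μ]
    have ha : q / m * ∑ ν, (∑ ρ, Gi μ ρ * Fm ρ ν) * A ν
        = ∑ ρ, Gi μ ρ * (q / m * (∑ σ, Fm ρ σ * A σ)) := by
      calc q / m * ∑ ν, (∑ ρ, Gi μ ρ * Fm ρ ν) * A ν
          = ∑ ν, ∑ ρ, Gi μ ρ * (q / m * (Fm ρ ν * A ν)) := by
            rw [Finset.mul_sum]
            refine Finset.sum_congr rfl fun ν _ => ?_
            rw [Finset.sum_mul, Finset.mul_sum]
            exact Finset.sum_congr rfl fun ρ _ => by ring
        _ = ∑ ρ, ∑ ν, Gi μ ρ * (q / m * (Fm ρ ν * A ν)) := Finset.sum_comm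
        _ = ∑ ρ, Gi μ ρ * (q / m * (∑ σ, Fm ρ σ * A σ)) := by
            refine Finset.sum_congr rfl fun ρ _ => ?_
            simp only [Finset.mul_sum]
    have hb : 1 / m * ∑ α, ∑ β, ((1/2) * ∑ ρ, Gi μ ρ * E α ρ β) * A α * A β
        = ∑ ρ, Gi μ ρ * (1 / m * ∑ α, ∑ β, (1/2) * E α ρ β * A α * A β) := by
      calc 1 / m * ∑ α, ∑ β, ((1/2) * ∑ ρ, Gi μ ρ * E α ρ β) * A α * A β
          = ∑ α, ∑ β, ∑ ρ, Gi μ ρ * (1 / m * ((1/2) * E α ρ β * A α * A β)) := by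
            rw [Finset.mul_sum]
            refine Finset.sum_congr rfl fun α _ => ?_
            rw [Finset.mul_sum]
            refine Finset.sum_congr rfl fun β _ => ?_
            simp only [Finset.mul_sum, Finset.sum_mul]
            exact Finset.sum_congr rfl fun ρ _ => by ring
        _ = ∑ α, ∑ ρ, ∑ β, Gi μ ρ * (1 / m * ((1/2) * E α ρ β * A α * A β)) :=
            Finset.sum_congr rfl fun α _ => Finset.sum_comm
        _ = ∑ ρ, ∑ α, ∑ β, Gi μ ρ * (1 / m * ((1/2) * E α ρ β * A α * A β)) := Finset.sum_comm
        _ = ∑ ρ, Gi μ ρ * (1 / m * ∑ α, ∑ β, (1/2) * E α ρ β * A α * A β) := by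
            refine Finset.sum_congr rfl fun ρ _ => ?_
            simp only [Finset.mul_sum]
    rw [ha, hb, ← Finset.sum_sub_distrib]
    exact Finset.sum_congr rfl fun ρ _ => (mul_sub _ _ _).symm
  have hGP : ∀ ν, (∑ μ, G μ ν * P μ) = Q ν := by
    intro ν
    calc (∑ μ, G μ ν * P μ) = ∑ ρ, (∑ μ, G μ ν * Gi μ ρ) * Q ρ := by
          simp only [hPQ, Finset.mul_sum]
          rw [Finset.sum_comm]
          exact Finset.sum_congr rfl fun ρ _ => by
            rw [Finset.sum_mul]; exact Finset.sum_congr rfl fun μ _ => by ring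
      _ = Q ν := by simp [ite_mul, hGGi]
  set T : ℝ := ∑ a, ∑ b, ∑ c, D a b c * A a * A b * A c with hT
  have piece1 : (∑ μ, ∑ ν, (∑ α, D α μ ν * (A α / m)) * A μ * A ν) = T / m := by
    calc (∑ μ, ∑ ν, (∑ α, D α μ ν * (A α / m)) * A μ * A ν)
        = ∑ μ, ∑ ν, ∑ α, D α μ ν * A α * A μ * A ν / m := by
          refine Finset.sum_congr rfl fun μ _ => Finset.sum_congr rfl fun ν _ => ?_
          rw [Finset.sum_mul, Finset.sum_mul]
          exact Finset.sum_congr rfl fun α _ => by ring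
      _ = ∑ μ, ∑ α, ∑ ν, D α μ ν * A α * A μ * A ν / m :=
          Finset.sum_congr rfl fun μ _ => Finset.sum_comm
      _ = ∑ α, ∑ μ, ∑ ν, D α μ ν * A α * A μ * A ν / m := Finset.sum_comm
      _ = T / m := by
          rw [hT, Finset.sum_div]
          refine Finset.sum_congr rfl fun a _ => ?_
          rw [Finset.sum_div]
          refine Finset.sum_congr rfl fun b _ => ?_
          rw [Finset.sum_div]
  have piece2 : (∑ μ, ∑ ν, G μ ν * P μ * A ν) = ∑ ν, Q ν * A ν := by
    calc (∑ μ, ∑ ν, G μ ν * P μ * A ν)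
        = ∑ ν, ∑ μ, G μ ν * P μ * A ν := Finset.sum_comm
      _ = ∑ ν, (∑ μ, G μ ν * P μ) * A ν :=
          Finset.sum_congr rfl fun ν _ => (Finset.sum_mul _ _ _).symm
      _ = ∑ ν, Q ν * A ν := by simp only [hGP]
  have piece3 : (∑ μ, ∑ ν, G μ ν * A μ * P ν) = ∑ ν, Q ν * A ν := by
    calc (∑ μ, ∑ ν, G μ ν * A μ * P ν)
        = ∑ μ, (∑ ν, G ν μ * P ν) * A μ := by
          refine Finset.sum_congr rfl fun μ _ => ?_
          rw [Finset.sum_mul]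
          exact Finset.sum_congr rfl fun ν _ => by rw [hGsymm μ ν]; ring
      _ = ∑ ν, Q ν * A ν := by simp only [hGP]
  have t1 : (∑ a, ∑ b, ∑ c, D b a c * A b * A c * A a) = T := by
    calc (∑ a, ∑ b, ∑ c, D b a c * A b * A c * A a)
        = ∑ b, ∑ a, ∑ c, D b a c * A b * A c * A a := Finset.sum_comm
      _ = T := by
          rw [hT]
          exact Finset.sum_congr rfl fun a _ => Finset.sum_congr rfl fun b _ =>
            Finset.sum_congr rfl fun c _ => by ring
  have t2 : (∑ a, ∑ b, ∑ c, D c a b * A b * A c * A a) = T := by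
    calc (∑ a, ∑ b, ∑ c, D c a b * A b * A c * A a)
        = ∑ a, ∑ c, ∑ b, D c a b * A b * A c * A a :=
          Finset.sum_congr rfl fun a _ => Finset.sum_comm
      _ = ∑ c, ∑ a, ∑ b, D c a b * A b * A c * A a := Finset.sum_comm
      _ = T := by
          rw [hT]
          exact Finset.sum_congr rfl fun a _ => Finset.sum_congr rfl fun b _ =>
            Finset.sum_congr rfl fun c _ => by ring
  have t3 : (∑ a, ∑ b, ∑ c, D a b c * A b * A c * A a) = T := by
    rw [hT]
    exact Finset.sum_congr rfl fun a _ => Finset.sum_congr rfl fun b _ =>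
      Finset.sum_congr rfl fun c _ => by ring
  have hU : (∑ a, ∑ b, ∑ c, E b a c * A b * A c * A a) = T := by
    simp only [hEapp, add_mul, sub_mul, Finset.sum_add_distrib, Finset.sum_sub_distrib]
    rw [t1, t2, t3]; ring
  have hQA : (∑ ν, Q ν * A ν) = -(1 / m * (T / 2)) := by
    calc (∑ ν, Q ν * A ν)
        = q / m * (∑ a, ∑ b, Fm a b * A a * A b)
          - 1 / m * ((1/2) * ∑ a, ∑ b, ∑ c, E b a c * A b * A c * A a) := by
          simp only [hQ, sub_mul, Finset.sum_sub_distrib]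
          congr 1
          · simp only [Finset.mul_sum, Finset.sum_mul]
            exact Finset.sum_congr rfl fun ν _ => Finset.sum_congr rfl fun σ _ => by ring
          · simp only [Finset.mul_sum, Finset.sum_mul]
            exact Finset.sum_congr rfl fun ν _ => Finset.sum_congr rfl fun b _ =>
              Finset.sum_congr rfl fun c _ => by ring
      _ = -(1 / m * (T / 2)) := by
          rw [anti_contract n Fm hF A, hU]; ring
  calc ∑ μ, ∑ ν, ((∑ α, D α μ ν * (A α / m)) * A μ * A ν
        + (G μ ν * P μ * A ν + G μ ν * A μ * P ν))
      = (∑ μ, ∑ ν, (∑ α, D α μ ν * (A α / m)) * A μ * A ν)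
        + ((∑ μ, ∑ ν, G μ ν * P μ * A ν) + (∑ μ, ∑ ν, G μ ν * A μ * P ν)) := by
        simp only [Finset.sum_add_distrib]
    _ = T / m + ((∑ ν, Q ν * A ν) + (∑ ν, Q ν * A ν)) := by rw [piece1, piece2, piece3]
    _ = 0 := by rw [hQA]; ring

/-- conservation of the mass shell. For a charged particle moving in a
curved spacetime with metric `g` (symmetric, invertible, C¹ with partial derivatives `Dg`)
under an antisymmetric electromagnetic field `F_{μν}`, obeying
`dx^μ/dτ = p^μ/m`, `dp^μ/dτ = (q/m) g^{μρ} F_{ρν} p^ν − (1/m) Γ^μ_{αβ} p^α p^β`,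
the function `τ ↦ g_{μν}(x(τ)) p^μ(τ) p^ν(τ)` is constant; in particular, a trajectory
starting on the mass shell `g_{μν} p^μ p^ν = −m²` remains on it for all `τ`. -/
theorem stmt_8 (d : ℕ) (hd : 1 ≤ d) (m q : ℝ) (hm : 0 < m)
    (g : (Fin (d + 1) → ℝ) → Matrix (Fin (d + 1)) (Fin (d + 1)) ℝ)
    (Dg : (Fin (d + 1) → ℝ) → Fin (d + 1) → Fin (d + 1) → Fin (d + 1) → ℝ)
    (hgsymm : ∀ y μ ν, g y μ ν = g y ν μ)
    (hginv : ∀ y, IsUnit (g y).det)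
    (hDg : ∀ y μ ν, HasFDerivAt (fun z => g z μ ν)
      (∑ α, Dg y α μ ν • (ContinuousLinearMap.proj α : ((Fin (d + 1)) → ℝ) →L[ℝ] ℝ)) y)
    (hDgcont : ∀ α μ ν, Continuous fun y => Dg y α μ ν)
    (F : (Fin (d + 1) → ℝ) → Matrix (Fin (d + 1)) (Fin (d + 1)) ℝ)
    (hFanti : ∀ y μ ν, F y μ ν = -F y ν μ)
    (x p : ℝ → Fin (d + 1) → ℝ)
    (hx : ∀ (τ : ℝ) (μ : Fin (d + 1)), HasDerivAt (fun s => x s μ) (p τ μ / m) τ)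
    (hp : ∀ (τ : ℝ) (μ : Fin (d + 1)), HasDerivAt (fun s => p s μ)
      (q / m * ∑ ν, (∑ ρ, (g (x τ))⁻¹ μ ρ * F (x τ) ρ ν) * p τ ν
        - 1 / m * ∑ α, ∑ β, Christoffel d g Dg (x τ) μ α β * p τ α * p τ β) τ) :
    (∀ τ₁ τ₂ : ℝ, (∑ μ, ∑ ν, g (x τ₁) μ ν * p τ₁ μ * p τ₁ ν)
        = ∑ μ, ∑ ν, g (x τ₂) μ ν * p τ₂ μ * p τ₂ ν) ∧
    (∀ τ₀ : ℝ, (∑ μ, ∑ ν, g (x τ₀) μ ν * p τ₀ μ * p τ₀ ν) = -m ^ 2 →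
      ∀ τ : ℝ, (∑ μ, ∑ ν, g (x τ) μ ν * p τ μ * p τ ν) = -m ^ 2) := by
  set S : ℝ → ℝ := fun s => ∑ μ, ∑ ν, g (x s) μ ν * p s μ * p s ν with hSdef
  have hS0 : ∀ τ : ℝ, HasDerivAt S 0 τ := by
    intro τ
    set P' : Fin (d + 1) → ℝ := fun μ =>
      q / m * ∑ ν, (∑ ρ, (g (x τ))⁻¹ μ ρ * F (x τ) ρ ν) * p τ ν
        - 1 / m * ∑ α, ∑ β, Christoffel d g Dg (x τ) μ α β * p τ α * p τ β with hP'def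
    have hxv : HasDerivAt x (fun α => p τ α / m) τ := hasDerivAt_pi.2 (fun α => hx τ α)
    have hgx : ∀ μ ν, HasDerivAt (fun s => g (x s) μ ν)
        (∑ α, Dg (x τ) α μ ν * (p τ α / m)) τ := by
      intro μ ν
      have h := (hDg (x τ) μ ν).comp_hasDerivAt τ hxv
      refine h.congr_deriv ?_
      simp [ContinuousLinearMap.sum_apply, ContinuousLinearMap.smul_apply,
        ContinuousLinearMap.proj_apply]
    have hterm : ∀ μ ν, HasDerivAt (fun s => g (x s) μ ν * p s μ * p s ν)
        ((∑ α, Dg (x τ) α μ ν * (p τ α / m)) * p τ μ * p τ ν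
          + (g (x τ) μ ν * P' μ * p τ ν + g (x τ) μ ν * p τ μ * P' ν)) τ := by
      intro μ ν
      have h := ((hgx μ ν).fun_mul (hp τ μ)).fun_mul (hp τ ν)
      refine h.congr_deriv ?_
      simp only [hP'def]
      ring
    have hsum : HasDerivAt S
        (∑ μ, ∑ ν, ((∑ α, Dg (x τ) α μ ν * (p τ α / m)) * p τ μ * p τ ν
          + (g (x τ) μ ν * P' μ * p τ ν + g (x τ) μ ν * p τ μ * P' ν))) τ :=
      HasDerivAt.fun_sum fun μ _ => HasDerivAt.fun_sum fun ν _ => hterm μ ν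
    have hGGi : ∀ ν ρ, (∑ μ, g (x τ) μ ν * (g (x τ))⁻¹ μ ρ) = if ν = ρ then 1 else 0 := by
      intro ν ρ
      calc (∑ μ, g (x τ) μ ν * (g (x τ))⁻¹ μ ρ)
          = ∑ μ, g (x τ) ν μ * (g (x τ))⁻¹ μ ρ :=
            Finset.sum_congr rfl fun μ _ => by rw [hgsymm (x τ) μ ν]
        _ = (g (x τ) * (g (x τ))⁻¹) ν ρ := (Matrix.mul_apply).symm
        _ = (1 : Matrix (Fin (d + 1)) (Fin (d + 1)) ℝ) ν ρ := by
            rw [Matrix.mul_nonsing_inv _ (hginv (x τ))]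
        _ = if ν = ρ then 1 else 0 := Matrix.one_apply
    have hzero := shell_alg (d + 1) m q (g (x τ)) ((g (x τ))⁻¹) (F (x τ))
      (fun α ρ β => Dg (x τ) α ρ β) (p τ) P'
      (fun μ ν => hgsymm (x τ) μ ν) hGGi (fun μ ν => hFanti (x τ) μ ν)
      (fun μ => rfl)
    rw [hzero] at hsum
    exact hsum
  have hconst : ∀ τ₁ τ₂ : ℝ, S τ₁ = S τ₂ :=
    fun τ₁ τ₂ => is_const_of_deriv_eq_zero (fun s => (hS0 s).differentiableAt)
      (fun s => (hS0 s).deriv) τ₁ τ₂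
  refine ⟨fun τ₁ τ₂ => hconst τ₁ τ₂, fun τ₀ h τ => ?_⟩
  calc (∑ μ, ∑ ν, g (x τ) μ ν * p τ μ * p τ ν) = S τ := rfl
    _ = S τ₀ := hconst τ τ₀
    _ = -m ^ 2 := h
end

section
/- Fix d ≥ 1 and q ∈ ℝ. Let g be a coordinate metric on ℝ^{d+1} with Christoffel symbols Γ^μ_{αβ}, let F_{μν} : ℝ^{d+1} → ℝ be antisymmetric (F_{μν} = −F_{νμ}), and let α : ℝ^{d+1} → ℝ and β_μ : ℝ^{d+1} → ℝ^{d+1} be differentiable. Define φ(x,p) := exp(−α(x) + β_μ(x)·p^μ) on ℝ^{d+1} × ℝ^{d+1}. Suppose the Liouville equation holds identically: for all (x,p), p^μ·(∂φ/∂x^μ − Γ^ρ_{μσ}(x)·p^σ·∂φ/∂p^ρ) + q·g^{μρ}(x)F_{ρν}(x)·p^ν·∂φ/∂p^μ = 0. Then at every x ∈ ℝ^{d+1}: (i) ∂_μ α(x) + q·β^ν(x)·F_{μν}(x) = 0 for all μ, where β^ν := g^{νρ}β_ρ; and (ii) β is a Killing covector field: ½(∂_μ β_ν + ∂_ν β_μ)(x)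 − Γ^ρ_{μν}(x)·β_ρ(x) = 0 for all μ, ν. -/
/-- The Jüttner-type equilibrium distribution `φ(x,p) = exp(−α(x) + β_μ(x) p^μ)`. -/
noncomputable def juttner (d : ℕ) (α : (Fin (d + 1) → ℝ) → ℝ)
    (β : (Fin (d + 1) → ℝ) → Fin (d + 1) → ℝ)
    (z : (Fin (d + 1) → ℝ) × (Fin (d + 1) → ℝ)) : ℝ :=
  Real.exp (-α z.1 + ∑ μ, β z.1 μ * z.2 μ)

/-- Coefficient extraction for a polynomial identity of degree ≤ 2. -/
lemma poly_lemma' {n : ℕ} (L : Fin (n + 1) → ℝ) (Q : Fin (n + 1) → Fin (n + 1) → ℝ)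
    (h : ∀ p : Fin (n + 1) → ℝ, ∑ ν, L ν * p ν + ∑ μ, ∑ ν, Q μ ν * p μ * p ν = 0) :
    (∀ ν, L ν = 0) ∧ ∀ μ ν, Q μ ν + Q ν μ = 0 := by
  have diag : ∀ ν t, t * L ν + t * t * Q ν ν = 0 := by
    intro ν t
    have := h (Pi.single ν t)
    simpa [Pi.single_apply, mul_ite, ite_mul, Finset.sum_ite_eq', mul_comm, mul_assoc,
      mul_left_comm] using this
  have hL : ∀ ν, L ν = 0 := by
    intro ν
    have h1 := diag ν 1
    have h2 := diag ν (-1)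
    simp at h1 h2; linarith
  have hQd : ∀ ν, Q ν ν = 0 := by
    intro ν; have h1 := diag ν 1; have := hL ν; simp [this] at h1; linarith
  refine ⟨hL, fun μ ν => ?_⟩
  by_cases hmn : μ = ν
  · subst hmn; simp [hQd μ]
  · have := h (Pi.single μ 1 + Pi.single ν 1)
    simp [Pi.single_apply, mul_ite, ite_mul, mul_add, add_mul, Finset.sum_add_distrib,
      Finset.sum_ite_eq', hL, hQd, hmn, Ne.symm hmn] at this
    linarith

/-- The derivative of the Jüttner distribution in an arbitrary direction. -/
lemma juttner_fderiv (d : ℕ) (α : (Fin (d + 1) → ℝ) → ℝ)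
    (β : (Fin (d + 1) → ℝ) → Fin (d + 1) → ℝ)
    (hα : Differentiable ℝ α) (hβ : ∀ μ, Differentiable ℝ fun x => β x μ)
    (x p v w : Fin (d + 1) → ℝ) :
    fderiv ℝ (juttner d α β) (x, p) (v, w) =
      juttner d α β (x, p) *
        (-(fderiv ℝ α x v) + ∑ μ, (fderiv ℝ (fun z => β z μ) x v * p μ + β x μ * w μ)) := by
  have hf : HasFDerivAt (fun z : (Fin (d + 1) → ℝ) × (Fin (d + 1) → ℝ) =>
      -α z.1 + ∑ μ, β z.1 μ * z.2 μ)
      (-((fderiv ℝ α x).comp (ContinuousLinearMap.fst ℝ (Fin (d+1) → ℝ) (Fin (d+1) → ℝ)))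
        + ∑ μ, (β x μ • ((ContinuousLinearMap.proj μ : ((Fin (d+1)) → ℝ) →L[ℝ] ℝ).comp
              (ContinuousLinearMap.snd ℝ (Fin (d+1) → ℝ) (Fin (d+1) → ℝ)))
            + p μ • ((fderiv ℝ (fun z => β z μ) x).comp
              (ContinuousLinearMap.fst ℝ (Fin (d+1) → ℝ) (Fin (d+1) → ℝ))))) (x, p) := by
    apply HasFDerivAt.add
    · exact (((hα x).hasFDerivAt.comp (x, p) hasFDerivAt_fst)).neg
    · apply HasFDerivAt.fun_sum
      intro μ _
      exact ((((hβ μ) x).hasFDerivAt.comp (x, p) hasFDerivAt_fst)).mul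
        (((ContinuousLinearMap.proj μ : ((Fin (d+1)) → ℝ) →L[ℝ] ℝ).comp
          (ContinuousLinearMap.snd ℝ (Fin (d+1) → ℝ) (Fin (d+1) → ℝ))).hasFDerivAt)
  have hexp := hf.exp
  have hj : HasFDerivAt (juttner d α β) _ (x, p) := hexp
  rw [hj.fderiv]
  simp only [ContinuousLinearMap.smul_apply, ContinuousLinearMap.add_apply,
    ContinuousLinearMap.coe_sum', Finset.sum_apply, ContinuousLinearMap.comp_apply,
    ContinuousLinearMap.neg_apply, ContinuousLinearMap.proj_apply,
    ContinuousLinearMap.coe_fst', ContinuousLinearMap.coe_snd', smul_eq_mul]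
  rw [show juttner d α β (x, p) = Real.exp (-α x + ∑ μ, β x μ * p μ) from rfl]
  rw [show (∑ μ, (β x μ * w μ + p μ * fderiv ℝ (fun z => β z μ) x v))
      = ∑ μ, (fderiv ℝ (fun z => β z μ) x v * p μ + β x μ * w μ)
    from Finset.sum_congr rfl fun μ _ => by ring]

/-- Factoring the common exponential out of the Liouville expression. -/
lemma aux_fac (n : ℕ) (E q : ℝ) (p b A s : Fin n → ℝ) (C : Fin n → Fin n → ℝ) :
    ∑ μ, p μ * (E * A μ - ∑ ρ, C μ ρ * (E * b ρ)) + q * ∑ μ, s μ * (E * b μ)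
      = E * (∑ μ, p μ * (A μ - ∑ ρ, C μ ρ * b ρ) + q * ∑ μ, s μ * b μ) := by
  have hA : ∑ μ, p μ * (E * A μ - ∑ ρ, C μ ρ * (E * b ρ))
      = E * ∑ μ, p μ * (A μ - ∑ ρ, C μ ρ * b ρ) := by
    rw [Finset.mul_sum]
    refine Finset.sum_congr rfl fun μ _ => ?_
    rw [show (∑ ρ, C μ ρ * (E * b ρ)) = E * ∑ ρ, C μ ρ * b ρ from by
      rw [Finset.mul_sum]; exact Finset.sum_congr rfl fun ρ _ => by ring]
    ring
  have hB : q * ∑ μ, s μ * (E * b μ) = E * (q * ∑ μ, s μ * b μ) := by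
    rw [show (∑ μ, s μ * (E * b μ)) = E * ∑ μ, s μ * b μ from by
      rw [Finset.mul_sum]; exact Finset.sum_congr rfl fun μ _ => by ring]
    ring
  rw [hA, hB, mul_add]

/-- Rearranging the Liouville polynomial into linear and quadratic coefficients. -/
lemma aux_poly (n : ℕ) (q : ℝ) (Dα p b : Fin n → ℝ) (Dβ Gi F : Fin n → Fin n → ℝ)
    (G : Fin n → Fin n → Fin n → ℝ) :
    ∑ μ, p μ * ((-(Dα μ) + ∑ ν, Dβ μ ν * p ν) - ∑ ρ, (∑ σ, G ρ μ σ * p σ) * b ρ)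
      + q * ∑ μ, (∑ ρ, Gi μ ρ * ∑ ν, F ρ ν * p ν) * b μ
    = ∑ ν, (-(Dα ν) + q * ∑ μ, ∑ ρ, Gi μ ρ * F ρ ν * b μ) * p ν
      + ∑ μ, ∑ ν, (Dβ μ ν - ∑ ρ, G ρ μ ν * b ρ) * p μ * p ν := by
  simp only [Finset.mul_sum, Finset.sum_mul, mul_sub, sub_mul, add_mul, mul_add, neg_mul,
    mul_neg, Finset.sum_add_distrib, Finset.sum_sub_distrib, Finset.sum_neg_distrib, sub_eq_add_neg]
  have e2 : ∑ x : Fin n, ∑ y : Fin n, p x * (Dβ x y * p y)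
      = ∑ x : Fin n, ∑ y : Fin n, Dβ x y * p x * p y :=
    Finset.sum_congr rfl fun _ _ => Finset.sum_congr rfl fun _ _ => by ring
  have e3 : ∑ x : Fin n, ∑ y : Fin n, ∑ z : Fin n, p x * (G y x z * p z * b y)
      = ∑ x : Fin n, ∑ y : Fin n, ∑ i : Fin n, G i x y * b i * p x * p y := by
    refine Finset.sum_congr rfl fun μ _ => ?_
    rw [Finset.sum_comm]
    exact Finset.sum_congr rfl fun _ _ => Finset.sum_congr rfl fun _ _ => by ring
  have e4 : ∑ x : Fin n, ∑ y : Fin n, ∑ z : Fin n, q * (Gi x y * (F y z * p z) * b x)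
      = ∑ x : Fin n, ∑ y : Fin n, ∑ z : Fin n, q * (Gi y z * F z x * b y) * p x := by
    calc ∑ x : Fin n, ∑ y : Fin n, ∑ z : Fin n, q * (Gi x y * (F y z * p z) * b x)
        = ∑ x : Fin n, ∑ z : Fin n, ∑ y : Fin n, q * (Gi x y * (F y z * p z) * b x) :=
          Finset.sum_congr rfl fun _ _ => Finset.sum_comm
      _ = ∑ z : Fin n, ∑ x : Fin n, ∑ y : Fin n, q * (Gi x y * (F y z * p z) * b x) :=
          Finset.sum_comm
      _ = ∑ x : Fin n, ∑ y : Fin n, ∑ z : Fin n, q * (Gi y z * F z x * b y) * p x :=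
          Finset.sum_congr rfl fun _ _ => Finset.sum_congr rfl fun _ _ =>
            Finset.sum_congr rfl fun _ _ => by ring
  have e1 : ∑ x : Fin n, p x * Dα x = ∑ x : Fin n, Dα x * p x :=
    Finset.sum_congr rfl fun _ _ => mul_comm _ _
  rw [e1, e2, e3, e4]
  ring

/-- the Liouville equation forces the equilibrium conditions. If the
Jüttner distribution `φ(x,p) = exp(−α(x) + β_μ(x) p^μ)` satisfies the Liouville equation
`p^μ (∂φ/∂x^μ − Γ^ρ_{μσ} p^σ ∂φ/∂p^ρ) + q g^{μρ} F_{ρν} p^ν ∂φ/∂p^μ = 0` identically,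
then at every `x`: (i) `∂_μ α + q β^ν F_{μν} = 0`, and (ii) `β` is a Killing covector:
`½(∂_μ β_ν + ∂_ν β_μ) − Γ^ρ_{μν} β_ρ = 0`. -/
theorem stmt_12 (d : ℕ) (hd : 1 ≤ d) (q : ℝ)
    (g : (Fin (d + 1) → ℝ) → Matrix (Fin (d + 1)) (Fin (d + 1)) ℝ)
    (Dg : (Fin (d + 1) → ℝ) → Fin (d + 1) → Fin (d + 1) → Fin (d + 1) → ℝ)
    (hgsymm : ∀ x μ ν, g x μ ν = g x ν μ)
    (hginv : ∀ x, IsUnit (g x).det)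
    (hDg : ∀ x μ ν, HasFDerivAt (fun z => g z μ ν)
      (∑ α, Dg x α μ ν • (ContinuousLinearMap.proj α : ((Fin (d + 1)) → ℝ) →L[ℝ] ℝ)) x)
    (F : (Fin (d + 1) → ℝ) → Matrix (Fin (d + 1)) (Fin (d + 1)) ℝ)
    (hFanti : ∀ x μ ν, F x μ ν = -F x ν μ)
    (α : (Fin (d + 1) → ℝ) → ℝ) (β : (Fin (d + 1) → ℝ) → Fin (d + 1) → ℝ)
    (hα : Differentiable ℝ α) (hβ : ∀ μ, Differentiable ℝ fun x => β x μ)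
    (hLiouville : ∀ (x p : Fin (d + 1) → ℝ),
      (∑ μ, p μ *
        (fderiv ℝ (juttner d α β) (x, p) ((Pi.single μ 1 : Fin (d + 1) → ℝ), 0)
          - ∑ ρ, (∑ σ, Christoffel d g Dg x ρ μ σ * p σ) *
              fderiv ℝ (juttner d α β) (x, p) (0, (Pi.single ρ 1 : Fin (d + 1) → ℝ))))
      + q * ∑ μ, (∑ ρ, (g x)⁻¹ μ ρ * ∑ ν, F x ρ ν * p ν) *
          fderiv ℝ (juttner d α β) (x, p) (0, (Pi.single μ 1 : Fin (d + 1) → ℝ)) = 0) :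
    ∀ x : Fin (d + 1) → ℝ,
      (∀ μ, fderiv ℝ α x (Pi.single μ 1)
          + q * ∑ ν, (∑ ρ, (g x)⁻¹ ν ρ * β x ρ) * F x μ ν = 0) ∧
      (∀ μ ν, (1 / 2) * (fderiv ℝ (fun z => β z ν) x (Pi.single μ 1)
            + fderiv ℝ (fun z => β z μ) x (Pi.single ν 1))
          - ∑ ρ, Christoffel d g Dg x ρ μ ν * β x ρ = 0) := by
  intro x
  -- symmetry of the inverse metric
  have hT : (g x).transpose = g x := Matrix.ext fun i j => hgsymm x j i
  have hginvsym : ∀ μ ν, (g x)⁻¹ μ ν = (g x)⁻¹ ν μ := by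
    intro μ ν
    calc (g x)⁻¹ μ ν = ((g x)⁻¹).transpose ν μ := (Matrix.transpose_apply _ _ _).symm
      _ = ((g x).transpose)⁻¹ ν μ := by rw [Matrix.transpose_nonsing_inv]
      _ = (g x)⁻¹ ν μ := by rw [hT]
  -- symmetry of Dg in its last two indices
  have hDgsymm : ∀ a μ ν, Dg x a μ ν = Dg x a ν μ := by
    intro a μ ν
    have h1 := (hDg x μ ν).fderiv
    have h2 := (hDg x ν μ).fderiv
    have hfun : (fun z => g z μ ν) = fun z => g z ν μ := funext fun z => hgsymm z μ ν
    rw [hfun] at h1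
    have h3 := h1.symm.trans h2
    have h4 := congrArg (fun (T : ((Fin (d + 1)) → ℝ) →L[ℝ] ℝ) => T (Pi.single a 1)) h3
    simpa [ContinuousLinearMap.coe_sum', Finset.sum_apply, ContinuousLinearMap.smul_apply,
      ContinuousLinearMap.proj_apply, Pi.single_apply, Finset.sum_ite_eq', smul_eq_mul]
      using h4
  -- symmetry of the Christoffel symbols
  have hΓsym : ∀ ρ μ ν, Christoffel d g Dg x ρ μ ν = Christoffel d g Dg x ρ ν μ := by
    intro ρ μ ν
    unfold Christoffel
    congr 1
    refine Finset.sum_congr rfl fun a _ => ?_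
    rw [hDgsymm a μ ν]
    ring
  -- the polynomial identity extracted from the Liouville equation
  have hS : ∀ p : Fin (d + 1) → ℝ,
      ∑ ν, (-(fderiv ℝ α x (Pi.single ν 1))
          + q * ∑ μ, ∑ ρ, (g x)⁻¹ μ ρ * F x ρ ν * β x μ) * p ν
        + ∑ μ, ∑ ν, (fderiv ℝ (fun z => β z ν) x (Pi.single μ 1)
          - ∑ ρ, Christoffel d g Dg x ρ μ ν * β x ρ) * p μ * p ν = 0 := by
    intro p
    have hc := hLiouville x p
    have h1 : ∀ μ : Fin (d + 1),
        fderiv ℝ (juttner d α β) (x, p) ((Pi.single μ 1 : Fin (d + 1) → ℝ), 0)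
        = juttner d α β (x, p) * ((-(fderiv ℝ α x (Pi.single μ 1))
            + ∑ ν, fderiv ℝ (fun z => β z ν) x (Pi.single μ 1) * p ν)) := by
      intro μ
      rw [juttner_fderiv d α β hα hβ x p (Pi.single μ 1) 0]
      simp
    have h2 : ∀ ρ : Fin (d + 1),
        fderiv ℝ (juttner d α β) (x, p) (0, (Pi.single ρ 1 : Fin (d + 1) → ℝ))
        = juttner d α β (x, p) * β x ρ := by
      intro ρ
      rw [juttner_fderiv d α β hα hβ x p 0 (Pi.single ρ 1)]
      simp [Pi.single_apply, mul_ite, Finset.sum_ite_eq']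
    simp only [h1, h2] at hc
    rw [aux_fac (d + 1) (juttner d α β (x, p)) q p (β x)
      (fun μ => -(fderiv ℝ α x (Pi.single μ 1))
        + ∑ ν, fderiv ℝ (fun z => β z ν) x (Pi.single μ 1) * p ν)
      (fun μ => ∑ ρ, (g x)⁻¹ μ ρ * ∑ ν, F x ρ ν * p ν)
      (fun μ ρ => ∑ σ, Christoffel d g Dg x ρ μ σ * p σ)] at hc
    have hE : juttner d α β (x, p) ≠ 0 := by
      unfold juttner; exact Real.exp_ne_zero _
    have hS0 := (mul_eq_zero.mp hc).resolve_left hE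
    rw [aux_poly (d + 1) q (fun ν => fderiv ℝ α x (Pi.single ν 1)) p (β x)
      (fun μ ν => fderiv ℝ (fun z => β z ν) x (Pi.single μ 1))
      (fun μ ρ => (g x)⁻¹ μ ρ) (fun ρ ν => F x ρ ν)
      (fun ρ μ σ => Christoffel d g Dg x ρ μ σ)] at hS0
    exact hS0
  obtain ⟨hL, hQ⟩ := poly_lemma'
    (fun ν => -(fderiv ℝ α x (Pi.single ν 1))
      + q * ∑ μ, ∑ ρ, (g x)⁻¹ μ ρ * F x ρ ν * β x μ)
    (fun μ ν => fderiv ℝ (fun z => β z ν) x (Pi.single μ 1)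
      - ∑ ρ, Christoffel d g Dg x ρ μ ν * β x ρ) hS
  constructor
  · intro μ
    have h0 := hL μ
    beta_reduce at h0
    have hrw : ∑ ν, (∑ ρ, (g x)⁻¹ ν ρ * β x ρ) * F x μ ν
        = -∑ a, ∑ ρ, (g x)⁻¹ a ρ * F x ρ μ * β x a := by
      rw [show (∑ a, ∑ ρ, (g x)⁻¹ a ρ * F x ρ μ * β x a)
          = ∑ ρ, ∑ a, (g x)⁻¹ a ρ * F x ρ μ * β x a from Finset.sum_comm]
      rw [← Finset.sum_neg_distrib]
      refine Finset.sum_congr rfl fun ν _ => ?_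
      rw [Finset.sum_mul, ← Finset.sum_neg_distrib]
      refine Finset.sum_congr rfl fun ρ _ => ?_
      rw [hginvsym ν ρ, hFanti x μ ν]
      ring
    rw [hrw]
    linarith
  · intro μ ν
    have h0 := hQ μ ν
    beta_reduce at h0
    have hsum : ∑ ρ, Christoffel d g Dg x ρ ν μ * β x ρ
        = ∑ ρ, Christoffel d g Dg x ρ μ ν * β x ρ :=
      Finset.sum_congr rfl fun ρ _ => by rw [hΓsym ρ μ ν]
    rw [hsum] at h0
    linarith
end

section
/- Fix d ≥ 1 and a symmetric (d+1)×(d+1) real matrix G with entries G_{μν}; for a vector V ∈ ℝ^{d+1} write V_μ := G_{μν}V^ν. Let S, n, U, Z, z ∈ ℝ^{d+1}, let T be a symmetric (d+1)×(d+1) real matrix with entries T^{μν}, and let P, α ∈ ℝ and β, γ ∈ ℝ with β ≠ 0, γ ≠ 0. Assume: (i) U = γ·(Z + z); (ii) γ = −G(U,Z) = −U^μ Z_μ; (iii) z^μ Z_μ = 0; and (iv) the covariant Euler relation S^μ = β·U^μ·P − T^{μν}·β·U_ν + α·n^μ for all μ. Define e_A := T^{μν}Z_μ Z_ν, n_A :=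 −Z_μ n^μ, s_A := −Z_μ S^μ, 𝒯_A := −T^{ρν} z_ρ Z_ν, T_A := (γβ)⁻¹ and μ_A := −α·(γβ)⁻¹. Then e_A = T_A·s_A + μ_A·n_A − P + 𝒯_A. -/
/-- localized Euler relation relative to the observer `Z`. With
lowered indices `V_μ := G_{μν} V^ν`, assume (i) `U = γ (Z + z)`, (ii) `γ = −U^μ Z_μ`,
(iii) `z^μ Z_μ = 0`, and (iv) the covariant Euler relation
`S^μ = β U^μ P − T^{μν} β U_ν + α n^μ`. Then with `e_A := T^{μν} Z_μ Z_ν`,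
`n_A := −Z_μ n^μ`, `s_A := −Z_μ S^μ`, `𝒯_A := −T^{ρν} z_ρ Z_ν`, `T_A := (γβ)⁻¹`,
`μ_A := −α (γβ)⁻¹`, one has `e_A = T_A s_A + μ_A n_A − P + 𝒯_A`. -/
theorem stmt_17 (d : ℕ) (hd : 1 ≤ d)
    (G : Matrix (Fin (d + 1)) (Fin (d + 1)) ℝ)
    (hGsymm : ∀ μ ν, G μ ν = G ν μ)
    (S n U Z z : Fin (d + 1) → ℝ)
    (T : Matrix (Fin (d + 1)) (Fin (d + 1)) ℝ)
    (hTsymm : ∀ μ ν, T μ ν = T ν μ)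
    (P α β γ : ℝ) (hβ : β ≠ 0) (hγ : γ ≠ 0)
    (hU : ∀ μ, U μ = γ * (Z μ + z μ))
    (hγdef : γ = -∑ μ, U μ * (∑ ν, G μ ν * Z ν))
    (hzZ : ∑ μ, z μ * (∑ ν, G μ ν * Z ν) = 0)
    (hEuler : ∀ μ, S μ = β * U μ * P
      - (∑ ν, T μ ν * β * (∑ ρ, G ν ρ * U ρ)) + α * n μ) :
    (∑ μ, ∑ ν, T μ ν * (∑ ρ, G μ ρ * Z ρ) * (∑ ρ, G ν ρ * Z ρ))
      = (γ * β)⁻¹ * (-∑ μ, (∑ ρ, G μ ρ * Z ρ) * S μ)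
        + (-(α * (γ * β)⁻¹)) * (-∑ μ, (∑ ρ, G μ ρ * Z ρ) * n μ)
        - P
        + (-∑ ρ, ∑ ν, T ρ ν * (∑ σ, G ρ σ * z σ) * (∑ σ, G ν σ * Z σ)) := by
  have hγβ : γ * β ≠ 0 := mul_ne_zero hγ hβ
  set ZL : Fin (d + 1) → ℝ := fun μ => ∑ ρ, G μ ρ * Z ρ with hZLdef
  set zl : Fin (d + 1) → ℝ := fun μ => ∑ σ, G μ σ * z σ with hzldef
  have hUL : ∀ ν, (∑ ρ, G ν ρ * U ρ) = γ * (ZL ν + zl ν) := by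
    intro ν
    have h : ∀ ρ ∈ Finset.univ, G ν ρ * U ρ = γ * (G ν ρ * Z ρ) + γ * (G ν ρ * z ρ) := by
      intro ρ _; rw [hU]; ring
    rw [Finset.sum_congr rfl h, Finset.sum_add_distrib, ← Finset.mul_sum, ← Finset.mul_sum]
    simp only [hZLdef, hzldef]; ring
  have hγ2 : ∑ μ, ZL μ * U μ = -γ := by
    have h : ∑ μ, U μ * (∑ ν, G μ ν * Z ν) = ∑ μ, ZL μ * U μ :=
      Finset.sum_congr rfl fun μ _ => by simp only [hZLdef]; ring
    rw [h] at hγdef; linarith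
  have key : ∑ μ, ZL μ * S μ
      = -(β * P * γ)
        - γ * β * ((∑ μ, ∑ ν, T μ ν * ZL μ * ZL ν) + (∑ μ, ∑ ν, T μ ν * ZL μ * zl ν))
        + α * (∑ μ, ZL μ * n μ) := by
    have h1 : ∀ μ ∈ Finset.univ, ZL μ * S μ
        = β * P * (ZL μ * U μ)
          - γ * β * ((∑ ν, T μ ν * ZL μ * ZL ν) + (∑ ν, T μ ν * ZL μ * zl ν))
          + α * (ZL μ * n μ) := by
      intro μ _
      rw [hEuler μ]
      have h2 : (∑ ν, T μ ν * β * (∑ ρ, G ν ρ * U ρ))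
          = γ * β * ((∑ ν, T μ ν * ZL ν) + (∑ ν, T μ ν * zl ν)) := by
        have h3 : ∀ ν ∈ Finset.univ, T μ ν * β * (∑ ρ, G ν ρ * U ρ)
            = γ * β * (T μ ν * ZL ν) + γ * β * (T μ ν * zl ν) := by
          intro ν _; rw [hUL ν]; ring
        rw [Finset.sum_congr rfl h3, Finset.sum_add_distrib, ← Finset.mul_sum, ← Finset.mul_sum]
        ring
      rw [h2]
      have h4 : ZL μ * ((∑ ν, T μ ν * ZL ν) + (∑ ν, T μ ν * zl ν))
          = (∑ ν, T μ ν * ZL μ * ZL ν) + (∑ ν, T μ ν * ZL μ * zl ν) := by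
        rw [mul_add, Finset.mul_sum, Finset.mul_sum]
        congr 1 <;> exact Finset.sum_congr rfl fun ν _ => by ring
      linear_combination (-(γ * β)) * h4
    rw [Finset.sum_congr rfl h1, Finset.sum_add_distrib, Finset.sum_sub_distrib,
      ← Finset.mul_sum, ← Finset.mul_sum, ← Finset.mul_sum, hγ2, Finset.sum_add_distrib]
    ring
  have hswap : (∑ μ, ∑ ν, T μ ν * ZL μ * zl ν) = ∑ ρ, ∑ ν, T ρ ν * zl ρ * ZL ν := by
    rw [Finset.sum_comm]
    exact Finset.sum_congr rfl fun ν _ => Finset.sum_congr rfl fun μ _ => by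
      rw [hTsymm]; ring
  rw [key, ← hswap]
  field_simp
  ring
end
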